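/- Let y satisfy π < y < 2π. Then −∫_{x=0}^{π} arctan(√(tan²(x/2)/sin²(y/2) + 1)·tan(y/2)) / √(tan²(x/2)/sin²(y/2) + 1) · sin(x) dx = (4·tan(y/2)/cos²(y/2)) · ∫_{z=y/2}^{π/2} (π − z)·cos²(z) dz, where the integral over z is the oriented (interval) integral from y/2 to π/2. -/

import Mathlib

open Real

set_option maxHeartbeats 1000000 in
private lemma crofton_key (a : ℝ) (ha1 : π / 2 < a) (ha2 : a < π) :
    (∫ x in (0:ℝ)..π,
      Real.arctan (Real.sqrt (Real.tan (x / 2) ^ 2 / Real.sin a ^ 2 + 1) * Real.tan a) /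
        Real.sqrt (Real.tan (x / 2) ^ 2 / Real.sin a ^ 2 + 1) * Real.sin x)
    = ∫ z in a..(π / 2), 4 * Real.tan a / Real.cos a ^ 2 * ((z - π) * Real.cos z ^ 2) := by
  have hpi := Real.pi_pos
  have hsa : 0 < Real.sin a := Real.sin_pos_of_pos_of_lt_pi (by linarith) ha2
  have hca : Real.cos a < 0 := Real.cos_neg_of_pi_div_two_lt_of_lt ha1 (by linarith)
  have hpyth := Real.sin_sq_add_cos_sq a
  have hca1 : -1 < Real.cos a := by nlinarith
  set c : ℝ := Real.cos a with hc
  set u : ℝ → ℝ := fun x => Real.cos (x / 2) * c with hu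
  have husq : ∀ x, (u x) ^ 2 < 1 := by
    intro x
    have h1 : (Real.cos (x / 2)) ^ 2 ≤ 1 :=
      by nlinarith [Real.neg_one_le_cos (x / 2), Real.cos_le_one (x / 2)]
    have h2 : c ^ 2 < 1 := by nlinarith
    calc (u x) ^ 2 = (Real.cos (x / 2)) ^ 2 * c ^ 2 := by ring
    _ ≤ 1 * c ^ 2 := by nlinarith [sq_nonneg c]
    _ < 1 := by linarith
  have hupos : ∀ x, 0 < 1 - (u x) ^ 2 := fun x => by linarith [husq x]
  have humem : ∀ x, u x ∈ Set.Icc (-1:ℝ) 1 := by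
    intro x
    constructor <;> nlinarith [husq x]
  have hult : ∀ x, -1 < u x := by
    intro x
    nlinarith [husq x]
  set f : ℝ → ℝ := fun x => Real.arccos (u x) with hf
  set f' : ℝ → ℝ := fun x => Real.sin (x / 2) * c / (2 * Real.sqrt (1 - (u x) ^ 2)) with hf'
  set g : ℝ → ℝ := fun z => 4 * Real.tan a / c ^ 2 * ((z - π) * Real.cos z ^ 2) with hg
  have hderiv : ∀ x, HasDerivAt f (f' x) x := by
    intro x
    have hne1 : u x ≠ -1 := by nlinarith [husq x]
    have hne2 : u x ≠ 1 := by nlinarith [husq x]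
    have h1 : HasDerivAt (fun t : ℝ => t / 2) (1 / 2) x := (hasDerivAt_id x).div_const 2
    have h2 : HasDerivAt (fun t : ℝ => Real.cos (t / 2)) (-Real.sin (x / 2) * (1 / 2)) x :=
      by have := (Real.hasDerivAt_cos (x / 2)).comp x h1; exact this
    have hu' : HasDerivAt u (-Real.sin (x / 2) * (1 / 2) * c) x := h2.mul_const c
    have h3 := (Real.hasDerivAt_arccos hne1 hne2).comp x hu'
    have hs : Real.sqrt (1 - (u x) ^ 2) ≠ 0 := by
      have := hupos x; positivity
    have h4 : -(1 / Real.sqrt (1 - u x ^ 2)) * (-Real.sin (x / 2) * (1 / 2) * c)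
        = Real.sin (x / 2) * c / (2 * Real.sqrt (1 - (u x) ^ 2)) := by
      field_simp
    rw [h4] at h3
    exact h3
  have hcontf' : Continuous f' := by
    apply Continuous.div
    · fun_prop
    · apply continuous_const.mul
      exact (Real.continuous_sqrt.comp (by fun_prop))
    · intro x
      have := hupos x
      positivity
  have hgcont : Continuous g := by fun_prop
  have hf0 : f 0 = a := by
    have : u 0 = Real.cos a := by simp [hu, hc]
    rw [hf]; simp only [this]
    exact Real.arccos_cos (by linarith) (by linarith)
  have hfpi : f π = π / 2 := by
    have : u π = 0 := by simp [hu, Real.cos_pi_div_two]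
    rw [hf]; simp only [this]
    exact Real.arccos_zero
  have heq : Set.EqOn
      (fun x => Real.arctan (Real.sqrt (Real.tan (x / 2) ^ 2 / Real.sin a ^ 2 + 1) * Real.tan a) /
        Real.sqrt (Real.tan (x / 2) ^ 2 / Real.sin a ^ 2 + 1) * Real.sin x)
      (fun x => f' x • (g ∘ f) x) (Set.uIcc 0 π) := by
    rw [Set.uIcc_of_le (by linarith)]
    intro x hx
    obtain ⟨hx0, hxpi⟩ := hx
    simp only [smul_eq_mul, Function.comp]
    rcases eq_or_lt_of_le hxpi with rfl | hxlt
    · rw [Real.sin_pi, mul_zero, hfpi]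
      simp only [hg]
      rw [Real.cos_pi_div_two]
      ring
    · -- 0 ≤ x < π
      have hc2 : 0 < Real.cos (x / 2) :=
        Real.cos_pos_of_mem_Ioo ⟨by linarith, by linarith⟩
      set s := Real.sqrt (1 - (u x) ^ 2) with hs
      have hspos : 0 < s := Real.sqrt_pos.mpr (hupos x)
      have hssq : s ^ 2 = 1 - (u x) ^ 2 := Real.sq_sqrt (le_of_lt (hupos x))
      have key1 : Real.sqrt (Real.tan (x / 2) ^ 2 / Real.sin a ^ 2 + 1)
          = s / (Real.sin a * Real.cos (x / 2)) := by
        have harg : Real.tan (x / 2) ^ 2 / Real.sin a ^ 2 + 1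
            = (s / (Real.sin a * Real.cos (x / 2))) ^ 2 := by
          have hp2 := Real.sin_sq_add_cos_sq (x / 2)
          rw [Real.tan_eq_sin_div_cos, div_pow, div_pow, hssq]
          simp only [hu]
          field_simp
          linear_combination hp2
            + (Real.cos (x/2)^2) * hpyth
        rw [harg, Real.sqrt_sq (by positivity)]
      have hcosf : Real.cos (f x) = u x :=
        Real.cos_arccos (humem x).1 (humem x).2
      have hsinf : Real.sin (f x) = s := Real.sin_arccos _
      have hux_neg : u x < 0 := mul_neg_of_pos_of_neg hc2 hca
      have hf_gt : π / 2 < f x := by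
        rw [← Real.arccos_zero]
        exact Real.strictAntiOn_arccos (humem x) (by norm_num) hux_neg
      have hf_lt : f x < π := by
        have h := Real.strictAntiOn_arccos (by norm_num : (-1:ℝ) ∈ Set.Icc (-1:ℝ) 1) (humem x)
          (hult x)
        rwa [Real.arccos_neg_one] at h
      have key3 : Real.arctan (s / (Real.sin a * Real.cos (x / 2)) * Real.tan a) = f x - π := by
        have htanf : Real.tan (f x - π) = s / (Real.sin a * Real.cos (x / 2)) * Real.tan a := by
          rw [Real.tan_periodic.sub_eq (f x), Real.tan_eq_sin_div_cos, hsinf, hcosf,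
            Real.tan_eq_sin_div_cos]
          rw [← hc] at *
          have hux : u x = Real.cos (x / 2) * c := rfl
          rw [hux]
          field_simp
        rw [← htanf, Real.arctan_tan (by linarith) (by linarith)]
      rw [key1, key3]
      have hsinx : Real.sin x = 2 * Real.sin (x / 2) * Real.cos (x / 2) := by
        have := Real.sin_two_mul (x / 2)
        rw [show 2 * (x / 2) = x by ring] at this
        linarith
      have hcne : c ≠ 0 := ne_of_lt hca
      simp only [hg]
      rw [hcosf]
      simp only [hf']
      rw [hsinx, ← hs, Real.tan_eq_sin_div_cos, ← hc]
      have hux : u x = Real.cos (x / 2) * c := rfl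
      rw [hux]
      field_simp
      ring
  calc (∫ x in (0:ℝ)..π,
      Real.arctan (Real.sqrt (Real.tan (x / 2) ^ 2 / Real.sin a ^ 2 + 1) * Real.tan a) /
        Real.sqrt (Real.tan (x / 2) ^ 2 / Real.sin a ^ 2 + 1) * Real.sin x)
      = ∫ x in (0:ℝ)..π, f' x • (g ∘ f) x := intervalIntegral.integral_congr heq
    _ = ∫ z in (f 0)..(f π), g z :=
        intervalIntegral.integral_comp_smul_deriv (fun x _ => hderiv x)
          hcontf'.continuousOn hgcont
    _ = ∫ z in a..(π / 2), g z := by rw [hf0, hfpi]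

/-- The Crofton substitution cos z = cos(x/2)cos(y/2) reduces the area-density
integral (case π < y < 2π) to the same elementary integral (with the integral
over z taken as the oriented integral from y/2 to π/2). -/
theorem crofton_substitution_gt_pi (y : ℝ) (h0 : π < y) (h1 : y < 2 * π) :
    -(∫ x in (0:ℝ)..π,
      Real.arctan (Real.sqrt (Real.tan (x / 2) ^ 2 / Real.sin (y / 2) ^ 2 + 1) *
          Real.tan (y / 2)) /
        Real.sqrt (Real.tan (x / 2) ^ 2 / Real.sin (y / 2) ^ 2 + 1) * Real.sin x)
    = (4 * Real.tan (y / 2) / Real.cos (y / 2) ^ 2) *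
        ∫ z in (y / 2)..(π / 2), (π - z) * Real.cos z ^ 2 := by
  have key := crofton_key (y / 2) (by linarith) (by linarith)
  rw [key, intervalIntegral.integral_const_mul]
  have h2 : (∫ z in (y / 2)..(π / 2), (z - π) * Real.cos z ^ 2)
      = -∫ z in (y / 2)..(π / 2), (π - z) * Real.cos z ^ 2 := by
    rw [← intervalIntegral.integral_neg]
    congr 1
    funext z
    ring
  rw [h2]
  ring
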